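/- For every fixed integer k ≥ 0, the ratio γ_k(z) of consecutive generation densities satisfies z · γ_k(z) → 2(k+1)/B as z → ∞; that is, γ_k(z) ∼ 2(k+1)/(Bz) far from the origin (downward deviation from self-similarity). -/

import Mathlib

open Real MeasureTheory Set Filter Topology

/-- The steady-state generation-`k` density in the normalized distance
`z = |x|√(λ/D)` from the origin:
`𝒜_k(z) = (μ(λB)^k/(k!(4πD)^{n/2})) ∫₀^∞ s^{k−n/2} exp(−λs − z²/(4λs)) ds`. -/
noncomputable def steadyDensity (n : ℕ) (lam D B mu : ℝ) (k : ℕ) (z : ℝ) : ℝ :=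
  (mu * (lam * B) ^ k / ((Nat.factorial k : ℝ) * (4 * π * D) ^ ((n : ℝ) / 2))) *
    ∫ s in Set.Ioi (0:ℝ),
      s ^ ((k : ℝ) - (n : ℝ) / 2) * Real.exp (-lam * s - z ^ 2 / (4 * lam * s))

/-- The consecutive-generation ratio `γ_k(z) = 𝒜_k(z)/𝒜_{k+1}(z)`. -/
noncomputable def genRatio (n : ℕ) (lam D B mu : ℝ) (k : ℕ) (z : ℝ) : ℝ :=
  steadyDensity n lam D B mu k z / steadyDensity n lam D B mu (k + 1) z

lemma pow_mul_exp_neg_le (m : ℕ) {x : ℝ} (hx : 0 ≤ x) :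
    x ^ m * Real.exp (-x) ≤ m.factorial := by
  have h1 : x ^ m / m.factorial ≤ Real.exp x := by
    calc x ^ m / m.factorial ≤ ∑ i ∈ Finset.range (m+1), x ^ i / i.factorial := by
          exact Finset.single_le_sum (f := fun i => x ^ i / i.factorial)
            (fun i _ => by positivity) (Finset.self_mem_range_succ m)
      _ ≤ Real.exp x := Real.sum_le_exp_of_nonneg hx _
  have hm : (0:ℝ) < m.factorial := by exact_mod_cast m.factorial_pos
  rw [div_le_iff₀ hm] at h1
  rw [Real.exp_neg]
  rw [mul_inv_le_iff₀ (Real.exp_pos x)]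
  linarith

lemma scaled_pow_mul_exp_neg_le (m : ℕ) {b x : ℝ} (hb : 0 < b) (hx : 0 ≤ x) :
    x ^ m * Real.exp (-(b * x)) ≤ m.factorial / b ^ m := by
  have := pow_mul_exp_neg_le m (x := b * x) (by positivity)
  rw [mul_pow] at this
  rw [le_div_iff₀ (by positivity : (0:ℝ) < b ^ m)]
  nlinarith [Real.exp_pos (-(b*x)), pow_nonneg hx m]

lemma meas_master (ν a b : ℝ) :
    Measurable (fun s : ℝ => s ^ ν * Real.exp (-(a*s) - b/s)) := by fun_prop

lemma integrableOn_master {a b : ℝ} (ν : ℝ) (ha : 0 < a) (hb : 0 < b) :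
    IntegrableOn (fun s : ℝ => s ^ ν * Real.exp (-(a*s) - b/s)) (Ioi 0) := by
  obtain ⟨m, hm⟩ : ∃ m : ℕ, |ν| ≤ m := exists_nat_ge |ν|
  have hmn : -(m:ℝ) ≤ ν := by cases abs_le.mp hm; linarith
  have hmp : ν ≤ (m:ℝ) := by cases abs_le.mp hm; linarith
  have hIoc : IntegrableOn (fun s : ℝ => s ^ ν * Real.exp (-(a*s) - b/s)) (Ioc 0 1) := by
    apply Measure.integrableOn_of_bounded (M := m.factorial / b ^ m) measure_Ioc_lt_top.ne
    · exact (meas_master ν a b).aestronglyMeasurable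
    · filter_upwards [ae_restrict_mem measurableSet_Ioc] with s hs
      obtain ⟨hs0, hs1⟩ := hs
      have h1 : s ^ ν ≤ s ^ (-(m:ℝ)) := Real.rpow_le_rpow_of_exponent_ge hs0 hs1 hmn
      have h2 : s ^ (-(m:ℝ)) = (s⁻¹) ^ m := by
        rw [Real.rpow_neg hs0.le, Real.rpow_natCast, inv_pow]
      have h3 : Real.exp (-(a*s) - b/s) ≤ Real.exp (-(b * s⁻¹)) := by
        apply Real.exp_le_exp.mpr
        rw [div_eq_mul_inv]
        nlinarith
      have h4 : (s⁻¹) ^ m * Real.exp (-(b * s⁻¹)) ≤ m.factorial / b ^ m :=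
        scaled_pow_mul_exp_neg_le m hb (by positivity)
      have hre : (0:ℝ) < s ^ ν := Real.rpow_pos_of_pos hs0 ν
      rw [Real.norm_eq_abs, abs_of_nonneg (by positivity)]
      calc s ^ ν * Real.exp (-(a*s) - b/s) ≤ (s⁻¹) ^ m * Real.exp (-(b * s⁻¹)) := by
            rw [← h2]
            apply mul_le_mul h1 h3 (Real.exp_pos _).le (Real.rpow_pos_of_pos hs0 _).le
        _ ≤ m.factorial / b ^ m := h4
  have hIoi : IntegrableOn (fun s : ℝ => s ^ ν * Real.exp (-(a*s) - b/s)) (Ioi 1) := by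
    have hint : IntegrableOn (fun s : ℝ => (m.factorial / (a/2) ^ m) * Real.exp (-(a/2) * s)) (Ioi 1) :=
      (exp_neg_integrableOn_Ioi 1 (by positivity)).const_mul _
    apply Integrable.mono' hint
    · exact ((meas_master ν a b).aestronglyMeasurable).restrict
    · filter_upwards [ae_restrict_mem measurableSet_Ioi] with s hs
      have hs1 : (1:ℝ) ≤ s := le_of_lt hs
      have hs0 : (0:ℝ) < s := lt_of_lt_of_le one_pos hs1
      have h1 : s ^ ν ≤ s ^ m := by
        rw [← Real.rpow_natCast s m]
        exact Real.rpow_le_rpow_of_exponent_le hs1 hmp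
      have h3 : Real.exp (-(a*s) - b/s) ≤ Real.exp (-((a/2)*s)) * Real.exp (-((a/2)*s)) := by
        rw [← Real.exp_add]
        apply Real.exp_le_exp.mpr
        have : 0 < b / s := by positivity
        nlinarith
      have h4 : s ^ m * Real.exp (-((a/2) * s)) ≤ m.factorial / (a/2) ^ m :=
        scaled_pow_mul_exp_neg_le m (by positivity) hs0.le
      rw [Real.norm_eq_abs, abs_of_nonneg
        (by positivity : (0:ℝ) ≤ s ^ ν * Real.exp (-(a*s) - b/s))]
      calc s ^ ν * Real.exp (-(a*s) - b/s)
          ≤ s ^ m * (Real.exp (-((a/2)*s)) * Real.exp (-((a/2)*s))) := by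
            apply mul_le_mul h1 h3 (Real.exp_pos _).le (by positivity)
        _ = (s ^ m * Real.exp (-((a/2)*s))) * Real.exp (-((a/2)*s)) := by ring
        _ ≤ (m.factorial / (a/2) ^ m) * Real.exp (-(a/2) * s) := by
            apply mul_le_mul_of_nonneg_right h4 (Real.exp_pos _).le |>.trans
            rw [neg_mul]
  rw [← Ioc_union_Ioi_eq_Ioi (zero_le_one : (0:ℝ) ≤ 1)]
  exact hIoc.union hIoi

lemma integral_master_pos {a b : ℝ} (ν : ℝ) (ha : 0 < a) (hb : 0 < b) :
    0 < ∫ s in Ioi (0:ℝ), s ^ ν * Real.exp (-(a*s) - b/s) := by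
  rw [setIntegral_pos_iff_support_of_nonneg_ae]
  · have hsub : Ioi (0:ℝ) ⊆ Function.support (fun s : ℝ => s ^ ν * Real.exp (-(a*s) - b/s)) := by
      intro s hs
      have : 0 < s ^ ν * Real.exp (-(a*s) - b/s) :=
        mul_pos (Real.rpow_pos_of_pos hs ν) (Real.exp_pos _)
      exact ne_of_gt this
    have : Function.support (fun s : ℝ => s ^ ν * Real.exp (-(a*s) - b/s)) ∩ Ioi 0 = Ioi 0 :=
      inter_eq_self_of_subset_right hsub
    rw [this]
    simp [Real.volume_Ioi]
  · filter_upwards [ae_restrict_mem measurableSet_Ioi] with s hs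
    exact le_of_lt (mul_pos (Real.rpow_pos_of_pos hs ν) (Real.exp_pos _))
  · exact integrableOn_master ν ha hb

noncomputable def G (ν z : ℝ) : ℝ :=
  ∫ u in Ioi (0:ℝ), u ^ ν * Real.exp (-(z/2) * (u + 1/u - 2))

lemma G_integrand_eq (ν z : ℝ) :
    (fun u : ℝ => u ^ ν * Real.exp (-(z/2) * (u + 1/u - 2)))
      = fun u => Real.exp z * (u ^ ν * Real.exp (-((z/2)*u) - (z/2)/u)) := by
  funext u
  rw [← mul_assoc, mul_comm (Real.exp z), mul_assoc]
  congr 1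
  rw [← Real.exp_add]
  congr 1
  rw [div_eq_mul_inv (z/2) u, one_div]
  ring

lemma G_eq (ν z : ℝ) :
    G ν z = Real.exp z * ∫ u in Ioi (0:ℝ), u ^ ν * Real.exp (-((z/2)*u) - (z/2)/u) := by
  rw [G, G_integrand_eq, integral_const_mul]

lemma G_integrableOn (ν : ℝ) {z : ℝ} (hz : 0 < z) :
    IntegrableOn (fun u : ℝ => u ^ ν * Real.exp (-(z/2) * (u + 1/u - 2))) (Ioi 0) := by
  rw [G_integrand_eq]
  exact (integrableOn_master ν (by positivity) (by positivity)).const_mul _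

lemma G_pos (ν : ℝ) {z : ℝ} (hz : 0 < z) : 0 < G ν z := by
  rw [G_eq]
  exact mul_pos (Real.exp_pos z) (integral_master_pos ν (by positivity) (by positivity))

lemma F_eq (ν : ℝ) {lam z : ℝ} (hlam : 0 < lam) (hz : 0 < z) :
    (∫ s in Ioi (0:ℝ), s ^ ν * Real.exp (-lam * s - z^2/(4*lam*s)))
      = (z/(2*lam)) ^ (ν+1) * Real.exp (-z) * G ν z := by
  set c : ℝ := z/(2*lam) with hc
  have hcpos : 0 < c := by positivity
  have key := integral_comp_mul_left_Ioi
    (fun s : ℝ => s ^ ν * Real.exp (-lam * s - z^2/(4*lam*s))) 0 hcpos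
  rw [mul_zero] at key
  have h2 : (∫ u in Ioi (0:ℝ),
      (c*u) ^ ν * Real.exp (-lam * (c*u) - z^2/(4*lam*(c*u))))
      = c ^ ν * Real.exp (-z) * G ν z := by
    rw [G]
    rw [← integral_const_mul]
    apply setIntegral_congr_fun measurableSet_Ioi
    intro u hu
    have hu0 : (0:ℝ) < u := hu
    have h3 : (c*u) ^ ν = c ^ ν * u ^ ν := Real.mul_rpow hcpos.le hu0.le
    have h4 : -lam * (c*u) - z^2/(4*lam*(c*u))
        = -z + (-(z/2) * (u + 1/u - 2)) := by
      rw [hc]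
      field_simp
      ring
    simp only
    rw [h3, h4, Real.exp_add]
    ring
  rw [h2] at key
  rw [smul_eq_mul] at key
  have : (∫ s in Ioi (0:ℝ), s ^ ν * Real.exp (-lam * s - z^2/(4*lam*s)))
      = c * (c ^ ν * Real.exp (-z) * G ν z) := by
    rw [key]
    rw [← mul_assoc, mul_inv_cancel₀ hcpos.ne', one_mul]
  rw [this, Real.rpow_add hcpos, Real.rpow_one]
  ring

lemma psi_nonneg {u : ℝ} (hu : 0 < u) : 0 ≤ u + 1/u - 2 := by
  have h : u * (1/u) = 1 := by field_simp
  nlinarith [sq_nonneg (u - 1), sq_nonneg (u + 1)]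

lemma psi_pos {u : ℝ} (hu : 0 < u) (hne : u ≠ 1) : 0 < u + 1/u - 2 := by
  have h : u * (1/u) = 1 := by field_simp
  have h2 : 0 < (u - 1)^2 := by
    have h3 : u - 1 ≠ 0 := sub_ne_zero.mpr hne
    positivity
  nlinarith

lemma psi_anti {u v : ℝ} (hu : 0 < u) (huv : u ≤ v) (hv1 : v ≤ 1) :
    v + 1/v - 2 ≤ u + 1/u - 2 := by
  have hv : 0 < v := lt_of_lt_of_le hu huv
  have h1 : u * (1/u) = 1 := by field_simp
  have h2 : v * (1/v) = 1 := by field_simp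
  have h3 : u * v ≤ 1 := by nlinarith
  have h4 : 0 < u * v := by positivity
  nlinarith [mul_pos hu hv, sq_nonneg (u - v)]

lemma psi_mono {u v : ℝ} (h1 : 1 ≤ u) (huv : u ≤ v) :
    u + 1/u - 2 ≤ v + 1/v - 2 := by
  have hu : 0 < u := lt_of_lt_of_le one_pos h1
  have hv : 0 < v := lt_of_lt_of_le hu huv
  have ha : u * (1/u) = 1 := by field_simp
  have hb : v * (1/v) = 1 := by field_simp
  have h3 : 1 ≤ u * v := by nlinarith
  nlinarith [mul_pos hu hv]

lemma psi_le_sq {u : ℝ} (h1 : 1 ≤ u) : u + 1/u - 2 ≤ (u - 1)^2 := by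
  have hu : 0 < u := lt_of_lt_of_le one_pos h1
  have ha : u * (1/u) = 1 := by field_simp
  nlinarith [sq_nonneg (u - 1)]

lemma G_zero_lower {z : ℝ} (hz : 1 ≤ z) : Real.exp (-2⁻¹) / Real.sqrt z ≤ G 0 z := by
  have hz0 : 0 < z := lt_of_lt_of_le one_pos hz
  set t : ℝ := (Real.sqrt z)⁻¹ with ht
  have hsq : 0 < Real.sqrt z := Real.sqrt_pos.mpr hz0
  have htpos : 0 < t := by positivity
  have ht2 : t^2 = z⁻¹ := by
    rw [ht, ← Real.sq_sqrt hz0.le]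
    field_simp
    rw [Real.sqrt_sq hsq.le]
  have hstep1 : ∫ u in Ioc (1:ℝ) (1+t), Real.exp (-(z/2) * (u + 1/u - 2))
      ≥ Real.exp (-2⁻¹) * t := by
    have hconst : IntegrableOn (fun _ : ℝ => Real.exp (-2⁻¹)) (Ioc 1 (1+t)) :=
      integrableOn_const measure_Ioc_lt_top.ne
    have hint : IntegrableOn (fun u : ℝ => Real.exp (-(z/2) * (u + 1/u - 2))) (Ioc 1 (1+t)) := by
      have := (G_integrableOn 0 hz0).mono_set
        (fun u (hu : u ∈ Ioc (1:ℝ) (1+t)) => lt_of_lt_of_le one_pos hu.1.le)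
      apply this.congr_fun ?_ measurableSet_Ioc
      intro u hu
      simp [Real.rpow_zero]
    have hmono := setIntegral_mono_on hconst hint measurableSet_Ioc ?_
    · rw [setIntegral_const, Real.volume_real_Ioc_of_le (by linarith : (1:ℝ) ≤ 1 + t), smul_eq_mul] at hmono
      have : (1 + t - 1) = t := by ring
      rw [this] at hmono
      linarith [hmono]
    · intro u hu
      obtain ⟨hu1, hu2⟩ := hu
      have hu1' : (1:ℝ) ≤ u := hu1.le
      have hpsi : u + 1/u - 2 ≤ z⁻¹ := by
        calc u + 1/u - 2 ≤ (u - 1)^2 := psi_le_sq hu1'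
          _ ≤ t^2 := by nlinarith
          _ = z⁻¹ := ht2
      apply Real.exp_le_exp.mpr
      have : (z/2) * (u + 1/u - 2) ≤ (z/2) * z⁻¹ := by
        apply mul_le_mul_of_nonneg_left hpsi (by positivity)
      have hzz : (z/2) * z⁻¹ = 2⁻¹ := by
        field_simp
      nlinarith
  have hstep2 : ∫ u in Ioc (1:ℝ) (1+t), Real.exp (-(z/2) * (u + 1/u - 2)) ≤ G 0 z := by
    rw [G]
    have heq : ∫ u in Ioc (1:ℝ) (1+t), Real.exp (-(z/2) * (u + 1/u - 2))
        = ∫ u in Ioc (1:ℝ) (1+t), u ^ (0:ℝ) * Real.exp (-(z/2) * (u + 1/u - 2)) := by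
      apply setIntegral_congr_fun measurableSet_Ioc
      intro u hu
      simp [Real.rpow_zero]
    rw [heq]
    apply setIntegral_mono_set (G_integrableOn 0 hz0)
    · filter_upwards [ae_restrict_mem measurableSet_Ioi] with u hu
      exact le_of_lt (mul_pos (Real.rpow_pos_of_pos hu 0) (Real.exp_pos _))
    · exact HasSubset.Subset.eventuallyLE
        (fun u (hu : u ∈ Ioc (1:ℝ) (1+t)) => lt_of_lt_of_le one_pos hu.1.le)
  calc Real.exp (-2⁻¹) / Real.sqrt z = Real.exp (-2⁻¹) * t := by rw [ht]; ring
    _ ≤ ∫ u in Ioc (1:ℝ) (1+t), Real.exp (-(z/2) * (u + 1/u - 2)) := hstep1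
    _ ≤ G 0 z := hstep2

lemma w_integrableOn {z : ℝ} (hz : 0 < z) :
    IntegrableOn (fun u : ℝ => Real.exp (-(z/2) * (u + 1/u - 2))) (Ioi 0) := by
  have h := G_integrableOn 0 hz
  simpa [Real.rpow_zero] using h

lemma G_zero_eq (z : ℝ) : G 0 z = ∫ u in Ioi (0:ℝ), Real.exp (-(z/2) * (u + 1/u - 2)) := by
  rw [G]
  congr 1
  funext u
  rw [Real.rpow_zero, one_mul]

lemma G_ratio_tendsto (ν : ℝ) :
    Tendsto (fun z => G ν z / G 0 z) atTop (𝓝 1) := by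
  rw [Metric.tendsto_atTop]
  intro ε hε
  set ε' : ℝ := ε/2 with hε'def
  have hε'pos : 0 < ε' := by positivity
  -- continuity of rpow at 1
  have hcont : ContinuousAt (fun u : ℝ => u ^ ν) 1 :=
    Real.continuousAt_rpow_const 1 ν (Or.inl one_ne_zero)
  rw [Metric.continuousAt_iff] at hcont
  obtain ⟨δ₀, hδ₀pos, hδ₀⟩ := hcont ε' hε'pos
  set δ : ℝ := min (δ₀/2) 2⁻¹ with hδdef
  have hδpos : 0 < δ := lt_min (by positivity) (by norm_num)
  have hδle : δ ≤ 2⁻¹ := min_le_right _ _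
  have hδlt : δ < δ₀ := lt_of_le_of_lt (min_le_left _ _) (by linarith)
  have h1δ : (0:ℝ) < 1 - δ := by linarith
  have hne_pt : ∀ u : ℝ, |u - 1| ≤ δ → |u ^ ν - 1| ≤ ε' := by
    intro u hu
    have hd : dist u 1 < δ₀ := by rw [Real.dist_eq]; linarith
    have h2 := hδ₀ hd
    rw [Real.dist_eq, Real.one_rpow] at h2
    exact h2.le
  set c : ℝ := min ((1-δ) + 1/(1-δ) - 2) ((1+δ) + 1/(1+δ) - 2) with hcdef
  have hcpos : 0 < c := by
    apply lt_min
    · exact psi_pos h1δ (by linarith [hδpos] : (1:ℝ) - δ ≠ 1)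
    · exact psi_pos (by linarith) (by linarith [hδpos] : (1:ℝ) + δ ≠ 1)
  have hpsi_tail : ∀ u : ℝ, u ∈ Ioi 0 \ Ioc (1-δ) (1+δ) → c ≤ u + 1/u - 2 := by
    rintro u ⟨hu0, hnot⟩
    rw [mem_Ioc, not_and_or] at hnot
    rcases hnot with h | h
    · push_neg at h
      exact le_trans (min_le_left _ _) (psi_anti hu0 h (by linarith))
    · push_neg at h
      exact le_trans (min_le_right _ _) (psi_mono (by linarith) h.le)
  set M : ℝ := G ν 2 + G 0 2 with hMdef
  have hMpos : 0 < M := add_pos (G_pos ν two_pos) (G_pos 0 two_pos)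
  -- the main estimate
  have hmain : ∀ z : ℝ, 2 ≤ z →
      |G ν z / G 0 z - 1| ≤ ε' + Real.exp (-((z-2)/2) * c) * M * (Real.sqrt z * Real.exp 2⁻¹) := by
    intro z hz2
    have hz0 : (0:ℝ) < z := by linarith
    have hz1 : (1:ℝ) ≤ z := by linarith
    set S : Set ℝ := Ioc (1-δ) (1+δ) with hSdef
    have hSsub : S ⊆ Ioi 0 := fun u hu => lt_trans h1δ hu.1
    have hfeq : (fun u : ℝ => (u ^ ν - 1) * Real.exp (-(z/2) * (u + 1/u - 2)))
        = fun u => u ^ ν * Real.exp (-(z/2) * (u + 1/u - 2))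
          - Real.exp (-(z/2) * (u + 1/u - 2)) := by funext u; ring
    have hfint : IntegrableOn
        (fun u : ℝ => (u ^ ν - 1) * Real.exp (-(z/2) * (u + 1/u - 2))) (Ioi 0) := by
      rw [hfeq]; exact (G_integrableOn ν hz0).sub (w_integrableOn hz0)
    have habs_int : IntegrableOn
        (fun u : ℝ => |(u ^ ν - 1) * Real.exp (-(z/2) * (u + 1/u - 2))|) (Ioi 0) := hfint.abs
    -- split
    have hsplit : (∫ u in Ioi (0:ℝ), |(u ^ ν - 1) * Real.exp (-(z/2) * (u + 1/u - 2))|)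
        = (∫ u in S, |(u ^ ν - 1) * Real.exp (-(z/2) * (u + 1/u - 2))|)
        + ∫ u in Ioi 0 \ S, |(u ^ ν - 1) * Real.exp (-(z/2) * (u + 1/u - 2))| := by
      rw [← setIntegral_union (disjoint_sdiff_self_right) (measurableSet_Ioi.diff measurableSet_Ioc)
        (habs_int.mono_set hSsub) (habs_int.mono_set diff_subset), union_diff_cancel hSsub]
    -- near bound
    have hS_bound : (∫ u in S, |(u ^ ν - 1) * Real.exp (-(z/2) * (u + 1/u - 2))|)
        ≤ ε' * G 0 z := by
      have step1 : (∫ u in S, |(u ^ ν - 1) * Real.exp (-(z/2) * (u + 1/u - 2))|)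
          ≤ ∫ u in S, ε' * Real.exp (-(z/2) * (u + 1/u - 2)) := by
        apply setIntegral_mono_on (habs_int.mono_set hSsub)
          (((w_integrableOn hz0).mono_set hSsub).const_mul ε') measurableSet_Ioc
        intro u hu
        rw [abs_mul, abs_of_nonneg (Real.exp_pos _).le]
        apply mul_le_mul_of_nonneg_right _ (Real.exp_pos _).le
        exact hne_pt u (abs_le.mpr ⟨by linarith [hu.1], by linarith [hu.2]⟩)
      have step2 : (∫ u in S, ε' * Real.exp (-(z/2) * (u + 1/u - 2)))
          ≤ ε' * G 0 z := by
        rw [integral_const_mul, G_zero_eq]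
        apply mul_le_mul_of_nonneg_left _ hε'pos.le
        apply setIntegral_mono_set (w_integrableOn hz0)
        · filter_upwards [ae_restrict_mem measurableSet_Ioi] with u _
          exact (Real.exp_pos _).le
        · exact HasSubset.Subset.eventuallyLE hSsub
      linarith
    -- tail bound
    have hg_int : IntegrableOn
        (fun u : ℝ => (u ^ ν + 1) * Real.exp (-(2/2) * (u + 1/u - 2))) (Ioi 0) := by
      have : (fun u : ℝ => (u ^ ν + 1) * Real.exp (-(2/2) * (u + 1/u - 2)))
          = fun u => u ^ ν * Real.exp (-(2/2) * (u + 1/u - 2))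
            + Real.exp (-(2/2) * (u + 1/u - 2)) := by funext u; ring
      rw [this]
      exact (G_integrableOn ν two_pos).add (w_integrableOn two_pos)
    have hg_eq : (∫ u in Ioi (0:ℝ), (u ^ ν + 1) * Real.exp (-(2/2) * (u + 1/u - 2))) = M := by
      have : (fun u : ℝ => (u ^ ν + 1) * Real.exp (-(2/2) * (u + 1/u - 2)))
          = fun u => u ^ ν * Real.exp (-(2/2) * (u + 1/u - 2))
            + Real.exp (-(2/2) * (u + 1/u - 2)) := by funext u; ring
      rw [this, integral_add (G_integrableOn ν two_pos) (w_integrableOn two_pos),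
        hMdef, G, G_zero_eq]
    have hT_bound : (∫ u in Ioi 0 \ S, |(u ^ ν - 1) * Real.exp (-(z/2) * (u + 1/u - 2))|)
        ≤ Real.exp (-((z-2)/2) * c) * M := by
      have step1 : (∫ u in Ioi 0 \ S, |(u ^ ν - 1) * Real.exp (-(z/2) * (u + 1/u - 2))|)
          ≤ ∫ u in Ioi 0 \ S,
              Real.exp (-((z-2)/2) * c) * ((u ^ ν + 1) * Real.exp (-(2/2) * (u + 1/u - 2))) := by
        apply setIntegral_mono_on (habs_int.mono_set diff_subset)
          ((hg_int.mono_set diff_subset).const_mul _)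
          (measurableSet_Ioi.diff measurableSet_Ioc)
        intro u hu
        have hu0 : (0:ℝ) < u := hu.1
        have hpsi0 : 0 ≤ u + 1/u - 2 := psi_nonneg hu0
        have hpsic : c ≤ u + 1/u - 2 := hpsi_tail u hu
        have hxν : (0:ℝ) ≤ u ^ ν := (Real.rpow_pos_of_pos hu0 ν).le
        have h1 : |u ^ ν - 1| ≤ u ^ ν + 1 := by
          rw [abs_sub_comm]
          calc |1 - u ^ ν| ≤ |1| + |u ^ ν| := abs_sub _ _
            _ = u ^ ν + 1 := by rw [abs_one, abs_of_nonneg hxν]; ring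
        have h2 : Real.exp (-(z/2) * (u + 1/u - 2))
            ≤ Real.exp (-((z-2)/2) * c) * Real.exp (-(2/2) * (u + 1/u - 2)) := by
          rw [← Real.exp_add]
          apply Real.exp_le_exp.mpr
          nlinarith [mul_le_mul_of_nonneg_left hpsic (by linarith : (0:ℝ) ≤ (z-2)/2)]
        rw [abs_mul, abs_of_nonneg (Real.exp_pos _).le]
        calc |u ^ ν - 1| * Real.exp (-(z/2) * (u + 1/u - 2))
            ≤ (u ^ ν + 1) * (Real.exp (-((z-2)/2) * c) * Real.exp (-(2/2) * (u + 1/u - 2))) :=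
              mul_le_mul h1 h2 (Real.exp_pos _).le (by positivity)
          _ = Real.exp (-((z-2)/2) * c) * ((u ^ ν + 1) * Real.exp (-(2/2) * (u + 1/u - 2))) := by
              ring
      have step2 : (∫ u in Ioi 0 \ S,
            Real.exp (-((z-2)/2) * c) * ((u ^ ν + 1) * Real.exp (-(2/2) * (u + 1/u - 2))))
          ≤ Real.exp (-((z-2)/2) * c) * M := by
        rw [integral_const_mul, ← hg_eq]
        apply mul_le_mul_of_nonneg_left _ (Real.exp_pos _).le
        apply setIntegral_mono_set hg_int
        · filter_upwards [ae_restrict_mem measurableSet_Ioi] with u hu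
          have : (0:ℝ) ≤ u ^ ν := (Real.rpow_pos_of_pos hu ν).le
          positivity
        · exact HasSubset.Subset.eventuallyLE diff_subset
      linarith
    -- combine
    have hdiff : G ν z - G 0 z
        = ∫ u in Ioi (0:ℝ), (u ^ ν - 1) * Real.exp (-(z/2) * (u + 1/u - 2)) := by
      rw [hfeq, integral_sub (G_integrableOn ν hz0) (w_integrableOn hz0), G, G_zero_eq]
    have habs : |G ν z - G 0 z| ≤ ε' * G 0 z + Real.exp (-((z-2)/2) * c) * M := by
      rw [hdiff]
      calc |∫ u in Ioi (0:ℝ), (u ^ ν - 1) * Real.exp (-(z/2) * (u + 1/u - 2))|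
          ≤ ∫ u in Ioi (0:ℝ), |(u ^ ν - 1) * Real.exp (-(z/2) * (u + 1/u - 2))| := by
            rw [← Real.norm_eq_abs]
            refine (norm_integral_le_integral_norm _).trans_eq ?_
            simp only [Real.norm_eq_abs]
        _ ≤ ε' * G 0 z + Real.exp (-((z-2)/2) * c) * M := by
            rw [hsplit]; exact add_le_add hS_bound hT_bound
    have hG0pos : 0 < G 0 z := G_pos 0 hz0
    have hlow : Real.exp (-2⁻¹) / Real.sqrt z ≤ G 0 z := G_zero_lower hz1
    have hlowpos : 0 < Real.exp (-2⁻¹) / Real.sqrt z := by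
      have : 0 < Real.sqrt z := Real.sqrt_pos.mpr hz0
      positivity
    have hratio : |G ν z / G 0 z - 1| = |G ν z - G 0 z| / G 0 z := by
      have heq : G ν z / G 0 z - 1 = (G ν z - G 0 z) / G 0 z := by
        field_simp
      rw [heq, abs_div, abs_of_pos hG0pos]
    rw [hratio]
    have htail_nonneg : 0 ≤ Real.exp (-((z-2)/2) * c) * M :=
      mul_nonneg (Real.exp_pos _).le hMpos.le
    have hstep : |G ν z - G 0 z| / G 0 z
        ≤ (ε' * G 0 z + Real.exp (-((z-2)/2) * c) * M) / G 0 z := by gcongr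
    have hstep2 : (ε' * G 0 z + Real.exp (-((z-2)/2) * c) * M) / G 0 z
        = ε' + (Real.exp (-((z-2)/2) * c) * M) / G 0 z := by
      field_simp
    have hstep3 : (Real.exp (-((z-2)/2) * c) * M) / G 0 z
        ≤ (Real.exp (-((z-2)/2) * c) * M) / (Real.exp (-2⁻¹) / Real.sqrt z) := by
      gcongr
    have hstep4 : (Real.exp (-((z-2)/2) * c) * M) / (Real.exp (-2⁻¹) / Real.sqrt z)
        = Real.exp (-((z-2)/2) * c) * M * (Real.sqrt z * Real.exp 2⁻¹) := by
      have hs : 0 < Real.sqrt z := Real.sqrt_pos.mpr hz0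
      rw [Real.exp_neg]
      field_simp
    rw [hstep4] at hstep3
    rw [hstep2] at hstep
    linarith
  -- the error term tends to zero
  have hR : Tendsto (fun z : ℝ =>
      Real.exp (-((z-2)/2) * c) * M * (Real.sqrt z * Real.exp 2⁻¹)) atTop (𝓝 0) := by
    have h1 : Tendsto (fun z : ℝ => z ^ (2⁻¹:ℝ) * Real.exp (-(c/2) * z)) atTop (𝓝 0) :=
      tendsto_rpow_mul_exp_neg_mul_atTop_nhds_zero 2⁻¹ (c/2) (by positivity)
    have h2 := h1.const_mul (M * Real.exp c * Real.exp 2⁻¹)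
    rw [mul_zero] at h2
    apply h2.congr'
    filter_upwards [eventually_ge_atTop (0:ℝ)] with z hz
    have he : -((z-2)/2) * c = c + (-(c/2) * z) := by ring
    rw [he, Real.exp_add, Real.sqrt_eq_rpow]
    norm_num
    ring
  rw [Metric.tendsto_atTop] at hR
  obtain ⟨N1, hN1⟩ := hR ε' hε'pos
  refine ⟨max N1 2, fun z hz => ?_⟩
  have hz2 : 2 ≤ z := le_trans (le_max_right _ _) hz
  have hzN1 : N1 ≤ z := le_trans (le_max_left _ _) hz
  have h3 := hN1 z hzN1
  rw [Real.dist_eq, sub_zero] at h3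
  have h4 : Real.exp (-((z-2)/2) * c) * M * (Real.sqrt z * Real.exp 2⁻¹) < ε' :=
    lt_of_abs_lt h3
  have h5 := hmain z hz2
  rw [Real.dist_eq]
  calc |G ν z / G 0 z - 1|
      ≤ ε' + Real.exp (-((z-2)/2) * c) * M * (Real.sqrt z * Real.exp 2⁻¹) := h5
    _ < ε' + ε' := by linarith
    _ = ε := by rw [hε'def]; ring

lemma G_ratio_pair_tendsto (ν : ℝ) :
    Tendsto (fun z => G ν z / G (ν+1) z) atTop (𝓝 1) := by
  have h1 := G_ratio_tendsto ν
  have h2 := G_ratio_tendsto (ν+1)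
  have h3 := h1.div h2 one_ne_zero
  rw [div_one] at h3
  apply h3.congr'
  filter_upwards [eventually_gt_atTop (0:ℝ)] with z hz
  have h0 : G 0 z ≠ 0 := (G_pos 0 hz).ne'
  have hν1 : G (ν+1) z ≠ 0 := (G_pos (ν+1) hz).ne'
  simp only [Pi.div_apply]
  field_simp

/-- Downward deviation far from the origin: for fixed `k`,
`z γ_k(z) → 2(k+1)/B` as `z → ∞`, i.e. `γ_k(z) ∼ 2(k+1)/(Bz)`. -/
theorem genRatio_far_from_origin
    (n : ℕ) (hn : 1 ≤ n) (lam D B mu : ℝ)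
    (hlam : 0 < lam) (hD : 0 < D) (hB : 0 < B) (hmu : 0 < mu) (k : ℕ) :
    Filter.Tendsto (fun z : ℝ => z * genRatio n lam D B mu k z) atTop
      (nhds (2 * ((k : ℝ) + 1) / B)) := by
  set ν : ℝ := (k : ℝ) - (n : ℝ)/2 with hν
  have hGt : Tendsto (fun z => 2 * ((k : ℝ) + 1) / B * (G ν z / G (ν+1) z)) atTop
      (𝓝 (2 * ((k : ℝ) + 1) / B)) := by
    have := (G_ratio_pair_tendsto ν).const_mul (2 * ((k : ℝ) + 1) / B)
    rwa [mul_one] at this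
  apply hGt.congr'
  filter_upwards [eventually_gt_atTop (0:ℝ)] with z hz
  -- rewrite both densities
  have hFk : steadyDensity n lam D B mu k z
      = (mu * (lam * B) ^ k / ((Nat.factorial k : ℝ) * (4 * π * D) ^ ((n : ℝ) / 2)))
        * ((z/(2*lam)) ^ (ν+1) * Real.exp (-z) * G ν z) := by
    rw [steadyDensity, F_eq ν hlam hz]
  have hcast : ((k+1 : ℕ) : ℝ) - (n : ℝ)/2 = ν + 1 := by push_cast [hν]; ring
  have hFk1 : steadyDensity n lam D B mu (k+1) z
      = (mu * (lam * B) ^ (k+1) / ((Nat.factorial (k+1) : ℝ) * (4 * π * D) ^ ((n : ℝ) / 2)))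
        * ((z/(2*lam)) ^ ((ν+1)+1) * Real.exp (-z) * G (ν+1) z) := by
    rw [steadyDensity, ← F_eq (ν+1) hlam hz, hcast]
  rw [genRatio, hFk, hFk1]
  have hb : (0:ℝ) < z/(2*lam) := by positivity
  have hbν : (0:ℝ) < (z/(2*lam)) ^ (ν+1) := Real.rpow_pos_of_pos hb _
  have hsplit : (z/(2*lam)) ^ ((ν+1)+1) = (z/(2*lam)) ^ (ν+1) * (z/(2*lam)) := by
    rw [Real.rpow_add hb, Real.rpow_one]
  rw [hsplit]
  have hP : (0:ℝ) < (4 * π * D) ^ ((n : ℝ) / 2) :=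
    Real.rpow_pos_of_pos (by positivity) _
  have hfact : ((k+1).factorial : ℝ) = ((k:ℝ) + 1) * (k.factorial : ℝ) := by
    rw [Nat.factorial_succ]; push_cast; ring
  have hGν : (0:ℝ) < G ν z := G_pos ν hz
  have hGν1 : (0:ℝ) < G (ν+1) z := G_pos (ν+1) hz
  have hkf : ((k.factorial : ℝ)) ≠ 0 := by
    exact_mod_cast k.factorial_ne_zero
  have hlB : (lam * B) ^ k ≠ 0 := by positivity
  have hexp : Real.exp (-z) ≠ 0 := (Real.exp_pos _).ne'
  rw [hfact]
  field_simp
  ring
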